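/- Under the setting of the previous propositions, let Z = [[U_k, -B(λ)BE^H, 0]; [0, 0, I_s]] with B(λ) = (I_m - U_kU_k^H)(BB^H - λ I_m)^{-1} and λ ≥ σ̂_1². Then for the unit left singular vector û of A = [B; E] with singular value σ̂_i (i ≤ k, σ̂_i > σ_{k+1}), min_{z ∈ range(Z)} ‖û - z‖ ≤ |γ σ_{k+1}(σ̂_i² - λ)| / (|σ_{k+1}² - σ̂_i²| · |σ_{k+1}² - λ|), where γ = ‖E^H ŷ^{(i)}‖ and ŷ^{(i)} is the bottom block of û. -/

import Mathlib

open Matrix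

section Helpers

lemma sum_dotProduct' {ι n : Type*} [Fintype ι] [Fintype n] (f : ι → n → ℂ) (w : n → ℂ) :
    (∑ j, f j) ⬝ᵥ w = ∑ j, f j ⬝ᵥ w := by
  simp only [dotProduct, Finset.sum_apply, Finset.sum_mul]
  exact Finset.sum_comm

lemma dotProduct_sum' {ι n : Type*} [Fintype ι] [Fintype n] (w : n → ℂ) (f : ι → n → ℂ) :
    w ⬝ᵥ (∑ j, f j) = ∑ j, w ⬝ᵥ f j := by
  simp only [dotProduct, Finset.sum_apply, Finset.mul_sum]
  exact Finset.sum_comm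

lemma vecMulVec_mulVec' {m n : Type*} [Fintype n] (a : m → ℂ) (b : n → ℂ) (x : n → ℂ) :
    vecMulVec a b *ᵥ x = (b ⬝ᵥ x) • a := by
  ext i
  simp only [mulVec, dotProduct, vecMulVec_apply, Pi.smul_apply, smul_eq_mul, Finset.sum_mul,
    Finset.mul_sum]
  exact Finset.sum_congr rfl fun j _ => by ring

lemma dot_self_eq {μ : Type*} [Fintype μ] (w : μ → ℂ) :
    star w ⬝ᵥ w = ((∑ i, Complex.normSq (w i) : ℝ) : ℂ) := by
  simp [dotProduct, Complex.normSq_eq_conj_mul_self]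

lemma dot_ortho_expand {ι μ : Type*} [Fintype ι] [DecidableEq ι] [Fintype μ] (u : ι → μ → ℂ)
    (hu : ∀ i j, star (u i) ⬝ᵥ u j = if i = j then 1 else 0) (β γ : ι → ℂ) :
    star (∑ j, β j • u j) ⬝ᵥ (∑ j, γ j • u j) = ∑ j, (starRingEnd ℂ) (β j) * γ j := by
  rw [star_sum]
  simp only [star_smul]
  rw [sum_dotProduct']
  simp only [dotProduct_sum', smul_dotProduct, dotProduct_smul, hu, smul_eq_mul, mul_ite,
    mul_one, mul_zero, Finset.sum_ite_eq', Finset.mem_univ, if_true]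
  exact Finset.sum_congr rfl fun j _ => by simp [mul_comm]

lemma dot_coeff {ι μ : Type*} [Fintype ι] [DecidableEq ι] [Fintype μ] (u : ι → μ → ℂ)
    (hu : ∀ i j, star (u i) ⬝ᵥ u j = if i = j then 1 else 0) (c : ι → ℂ) (l : ι) :
    star (u l) ⬝ᵥ (∑ j, c j • u j) = c l := by
  rw [dotProduct_sum']
  simp only [dotProduct_smul, hu, smul_eq_mul, mul_ite, mul_one, mul_zero]
  rw [Finset.sum_ite_eq Finset.univ l c]
  simp

lemma norm_ortho {ι μ : Type*} [Fintype ι] [DecidableEq ι] [Fintype μ] (u : ι → μ → ℂ)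
    (hu : ∀ i j, star (u i) ⬝ᵥ u j = if i = j then 1 else 0) (β : ι → ℂ) :
    ∑ i, Complex.normSq ((∑ j, β j • u j) i) = ∑ j, Complex.normSq (β j) := by
  have h := dot_ortho_expand u hu β β
  rw [dot_self_eq] at h
  have h2 : ∑ j, (starRingEnd ℂ) (β j) * β j = ((∑ j, Complex.normSq (β j) : ℝ) : ℂ) := by
    simp [Complex.normSq_eq_conj_mul_self]
  rw [h2] at h
  exact_mod_cast h

lemma bessel {ι μ : Type*} [Fintype ι] [DecidableEq ι] [Fintype μ] (v : ι → μ → ℂ)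
    (hv : ∀ i j, star (v i) ⬝ᵥ v j = if i = j then 1 else 0) (x : μ → ℂ) :
    ∑ j, Complex.normSq (star (v j) ⬝ᵥ x) ≤ ∑ i, Complex.normSq (x i) := by
  set t : ι → ℂ := fun j => star (v j) ⬝ᵥ x with ht
  set p : μ → ℂ := ∑ j, t j • v j with hp
  have h1 : star p ⬝ᵥ x = ((∑ j, Complex.normSq (t j) : ℝ) : ℂ) := by
    rw [hp, star_sum]
    simp only [star_smul]
    rw [sum_dotProduct']
    simp only [smul_dotProduct, smul_eq_mul]
    simp [← ht, Complex.normSq_eq_conj_mul_self]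
    rfl
  have h2 : star p ⬝ᵥ p = ((∑ j, Complex.normSq (t j) : ℝ) : ℂ) := by
    rw [hp, dot_ortho_expand v hv t t]
    simp [Complex.normSq_eq_conj_mul_self]
  have h3 : star x ⬝ᵥ p = ((∑ j, Complex.normSq (t j) : ℝ) : ℂ) := by
    have := congrArg star h1
    rw [star_dotProduct] at this
    simpa using this
  have key : star (x - p) ⬝ᵥ (x - p)
      = ((∑ i, Complex.normSq (x i) - ∑ j, Complex.normSq (t j) : ℝ) : ℂ) := by
    rw [star_sub, sub_dotProduct, dotProduct_sub, dotProduct_sub, h2, h3,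
      dot_self_eq x, h1]
    push_cast; ring
  have h0 : (0:ℝ) ≤ ∑ i, Complex.normSq (x i) - ∑ j, Complex.normSq (t j) := by
    have hre : ∑ i, Complex.normSq ((x - p) i)
        = ∑ i, Complex.normSq (x i) - ∑ j, Complex.normSq (t j) := by
      exact_mod_cast (dot_self_eq (x - p)).symm.trans key
    rw [← hre]
    exact Finset.sum_nonneg fun i _ => Complex.normSq_nonneg _
  linarith

lemma sum_mulVec' {ι m n : Type*} [Fintype ι] [Fintype n] (M : ι → Matrix m n ℂ) (x : n → ℂ) :
    (∑ j, M j) *ᵥ x = ∑ j, M j *ᵥ x := by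
  ext i
  simp only [mulVec, dotProduct, Finset.sum_apply, Matrix.sum_apply, Finset.sum_mul]
  exact Finset.sum_comm

lemma mulVec_sum' {ι m n : Type*} [Fintype ι] [Fintype n] (M : Matrix m n ℂ) (f : ι → n → ℂ) :
    M *ᵥ (∑ j, f j) = ∑ j, M *ᵥ f j := by
  ext i
  simp only [mulVec, dotProduct, Finset.sum_apply, Finset.mul_sum]
  exact Finset.sum_comm

lemma sum_castLE {k r : ℕ} (hk : k ≤ r) {V : Type*} [AddCommMonoid V] (g : Fin r → V) :
    ∑ i : Fin k, g (Fin.castLE hk i) = ∑ j : Fin r, if (j : ℕ) < k then g j else 0 := by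
  classical
  rw [Finset.sum_ite, Finset.sum_const_zero, add_zero]
  rw [show (∑ i : Fin k, g (Fin.castLE hk i))
      = ∑ j ∈ Finset.univ.map ⟨Fin.castLE hk, Fin.castLE_injective hk⟩, g j from
    (Finset.sum_map Finset.univ ⟨Fin.castLE hk, Fin.castLE_injective hk⟩ g).symm]
  congr 1
  ext j
  simp only [Finset.mem_map, Finset.mem_univ, true_and, Finset.mem_filter,
    Function.Embedding.coeFn_mk]
  constructor
  · rintro ⟨i, rfl⟩; exact i.2
  · rintro hj; exact ⟨⟨(j : ℕ), hj⟩, by ext; simp⟩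

end Helpers

/-- The Euclidean (ℓ₂) norm of a complex vector. -/
noncomputable def l2norm {ι : Type*} [Fintype ι] (w : ι → ℂ) : ℝ :=
  Real.sqrt (∑ i, Complex.normSq (w i))

set_option maxHeartbeats 2000000 in
/-- Proposition 5: with the enhanced basis `Z = [[U_k, -B(λ)BEᴴ, 0], [0, 0, I_s]]` and
`λ ≥ σ̂₁²`, the distance of a unit left singular vector `û = [f; y]` of `A = [B; E]` with
singular value `σ' > σ_{k+1}` from `range(Z)` is bounded by
`|γ σ_{k+1}(σ'² - λ)| / (|σ_{k+1}² - σ'²|·|σ_{k+1}² - λ|)`, `γ = ‖Eᴴ y‖`. -/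
theorem distance_bound_enhanced_basis {m n s k : ℕ}
    (B : Matrix (Fin m) (Fin n) ℂ) (E : Matrix (Fin s) (Fin n) ℂ)
    (A : Matrix (Fin m ⊕ Fin s) (Fin n) ℂ) (hA : A = fromRows B E)
    (u : Fin (Nat.min m n) → Fin m → ℂ) (v : Fin (Nat.min m n) → Fin n → ℂ)
    (σ : Fin (Nat.min m n) → ℝ)
    (hu : ∀ i j, star (u i) ⬝ᵥ u j = if i = j then 1 else 0)
    (hv : ∀ i j, star (v i) ⬝ᵥ v j = if i = j then 1 else 0)
    (hB : B = ∑ j, ((σ j : ℝ) : ℂ) • vecMulVec (u j) (star (v j)))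
    (hσanti : Antitone σ) (hσnn : ∀ j, 0 ≤ σ j)
    (hkm : k < Nat.min m n)
    (σ' : ℝ) (f : Fin m → ℂ) (y : Fin s → ℂ)
    (hne : ∀ j, σ' ^ 2 ≠ (σ j) ^ 2)
    (hinv : IsUnit (B * Bᴴ - ((σ' : ℂ) ^ 2) • (1 : Matrix (Fin m) (Fin m) ℂ)))
    (hunit : ∑ i, Complex.normSq (Sum.elim f y i) = 1)
    (hsv : (A * Aᴴ) *ᵥ Sum.elim f y = ((σ' : ℂ) ^ 2) • Sum.elim f y)
    (hgap : σ ⟨k, hkm⟩ < σ')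
    (lam : ℝ)
    (hlam : ∀ w : Fin m ⊕ Fin s → ℂ,
      (star w ⬝ᵥ ((A * Aᴴ) *ᵥ w)).re ≤ lam * (star w ⬝ᵥ w).re)
    (hinvlam : IsUnit (B * Bᴴ - ((lam : ℝ) : ℂ) • (1 : Matrix (Fin m) (Fin m) ℂ)))
    (P Blam : Matrix (Fin m) (Fin m) ℂ)
    (hP : P = ∑ j : Fin k,
      vecMulVec (u (Fin.castLE hkm.le j)) (star (u (Fin.castLE hkm.le j))))
    (hBlam : Blam = (1 - P) *
      (B * Bᴴ - ((lam : ℝ) : ℂ) • (1 : Matrix (Fin m) (Fin m) ℂ))⁻¹) :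
    sInf {d : ℝ | ∃ (c : Fin k → ℂ) (w' : Fin s → ℂ) (w : Fin s → ℂ),
        d = l2norm (Sum.elim f y -
          Sum.elim (∑ j : Fin k, c j • u (Fin.castLE hkm.le j) +
            (-(Blam * B * Eᴴ)) *ᵥ w') w)} ≤
      |l2norm (Eᴴ *ᵥ y) * σ ⟨k, hkm⟩ * (σ' ^ 2 - lam)| /
        (|(σ ⟨k, hkm⟩) ^ 2 - σ' ^ 2| * |(σ ⟨k, hkm⟩) ^ 2 - lam|) := by
  classical
  set ιk : Fin (Nat.min m n) := ⟨k, hkm⟩ with hιk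
  set K : Fin k → Fin (Nat.min m n) := Fin.castLE hkm.le with hKdef
  set t : Fin (Nat.min m n) → ℂ := fun j => star (v j) ⬝ᵥ (Eᴴ *ᵥ y) with ht
  -- nonzero denominators
  have hdneR : ∀ j, (σ j) ^ 2 - σ' ^ 2 ≠ 0 := fun j h => hne j (by linarith)
  have hdne : ∀ j, ((σ j : ℂ) ^ 2 - (σ' : ℂ) ^ 2) ≠ 0 := by
    intro j h
    apply hdneR j
    have : (((σ j) ^ 2 - σ' ^ 2 : ℝ) : ℂ) = 0 := by push_cast; linear_combination h
    exact_mod_cast this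
  -- B and Bᴴ acting on vectors
  have hBmv : ∀ x : Fin n → ℂ, B *ᵥ x = ∑ j, ((σ j : ℂ) * (star (v j) ⬝ᵥ x)) • u j := by
    intro x
    rw [hB, sum_mulVec']
    refine Finset.sum_congr rfl fun j _ => ?_
    rw [smul_mulVec, vecMulVec_mulVec', smul_smul]
  have hBH : Bᴴ = ∑ j, ((σ j : ℂ)) • vecMulVec (v j) (star (u j)) := by
    rw [hB]
    ext i j
    simp only [conjTranspose_apply, Matrix.sum_apply, Matrix.smul_apply, vecMulVec_apply,
      Pi.star_apply, smul_eq_mul, star_sum, star_mul']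
    refine Finset.sum_congr rfl fun l _ => ?_
    simp only [Matrix.smul_apply, vecMulVec_apply, Pi.star_apply, smul_eq_mul, star_mul',
      Complex.star_def, Complex.conj_ofReal, RingHom.id_apply, RCLike.star_def]
    ring_nf
    simp [mul_comm]
  have hBHmv : ∀ x : Fin m → ℂ, Bᴴ *ᵥ x = ∑ j, ((σ j : ℂ) * (star (u j) ⬝ᵥ x)) • v j := by
    intro x
    rw [hBH, sum_mulVec']
    refine Finset.sum_congr rfl fun j _ => ?_
    rw [smul_mulVec, vecMulVec_mulVec', smul_smul]
  have hBHu : ∀ j, Bᴴ *ᵥ u j = (σ j : ℂ) • v j := by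
    intro j
    rw [hBHmv]
    simp only [hu, mul_ite, mul_one, mul_zero, ite_smul, zero_smul]
    rw [Finset.sum_ite_eq' Finset.univ j (fun l => ((σ l : ℂ)) • v l)]
    simp
  have hBv : ∀ j, B *ᵥ v j = (σ j : ℂ) • u j := by
    intro j
    rw [hBmv]
    simp only [hv, mul_ite, mul_one, mul_zero, ite_smul, zero_smul]
    rw [Finset.sum_ite_eq' Finset.univ j (fun l => ((σ l : ℂ)) • u l)]
    simp
  have hBBu : ∀ j, B *ᵥ (Bᴴ *ᵥ u j) = ((σ j : ℂ) ^ 2) • u j := by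
    intro j
    rw [hBHu, mulVec_smul, hBv, smul_smul]
    ring_nf
  -- the top-block eigen-equation
  have hAH : Aᴴ = fromCols Bᴴ Eᴴ := by
    rw [hA, conjTranspose_fromRows_eq_fromCols_conjTranspose]
  have hsv' : Sum.elim (B *ᵥ (Bᴴ *ᵥ f + Eᴴ *ᵥ y)) (E *ᵥ (Bᴴ *ᵥ f + Eᴴ *ᵥ y))
      = ((σ' : ℂ) ^ 2) • Sum.elim f y := by
    rw [← hsv, ← mulVec_mulVec, hAH, fromCols_mulVec_sumElim, hA, fromRows_mulVec]
  have htop : B *ᵥ (Bᴴ *ᵥ f) + B *ᵥ (Eᴴ *ᵥ y) = ((σ' : ℂ) ^ 2) • f := by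
    rw [← mulVec_add]
    funext i
    have := congrFun hsv' (Sum.inl i)
    simpa using this
  -- f in terms of the u basis
  set α : Fin (Nat.min m n) → ℂ :=
    fun j => -((σ j : ℂ) * t j) / ((σ j : ℂ) ^ 2 - (σ' : ℂ) ^ 2) with hα
  set g : Fin m → ℂ := B *ᵥ (Eᴴ *ᵥ y) with hgdef
  have hg : g = ∑ j, ((σ j : ℂ) * t j) • u j := hBmv _
  set M : Matrix (Fin m) (Fin m) ℂ := B * Bᴴ - ((σ' : ℂ) ^ 2) • 1 with hM
  have hMv : ∀ x, M *ᵥ x = B *ᵥ (Bᴴ *ᵥ x) - ((σ' : ℂ) ^ 2) • x := by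
    intro x
    rw [hM, sub_mulVec, smul_mulVec, one_mulVec, mulVec_mulVec]
  have hf : f = ∑ j, α j • u j := by
    have hMinj : Function.Injective (M.mulVec) :=
      mulVec_injective_iff_isUnit.mpr hinv
    apply hMinj
    have hL : M *ᵥ f = -g := by
      rw [hMv]
      have : B *ᵥ (Bᴴ *ᵥ f) = ((σ' : ℂ) ^ 2) • f - g := by
        rw [← htop]; abel
      rw [this]; abel
    have hR : M *ᵥ (∑ j, α j • u j) = -g := by
      rw [mulVec_sum']
      have : ∀ j, M *ᵥ (α j • u j) = (-((σ j : ℂ) * t j)) • u j := by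
        intro j
        rw [mulVec_smul, hMv, hBBu, ← sub_smul, smul_smul]
        congr 1
        rw [hα]
        exact div_mul_cancel₀ _ (hdne j)
      simp only [this, neg_smul]
      rw [hg]
      exact Finset.sum_neg_distrib _
    rw [hL, hR]
  -- lam-related denominators
  set Mlam : Matrix (Fin m) (Fin m) ℂ :=
    B * Bᴴ - ((lam : ℝ) : ℂ) • 1 with hMlam
  have hMlamv : ∀ x, Mlam *ᵥ x = B *ᵥ (Bᴴ *ᵥ x) - ((lam : ℝ) : ℂ) • x := by
    intro x
    rw [hMlam, sub_mulVec, smul_mulVec, one_mulVec, mulVec_mulVec]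
  have hMlaminj : Function.Injective (Mlam.mulVec) :=
    mulVec_injective_iff_isUnit.mpr hinvlam
  have hlamne : ∀ j, ((σ j : ℂ) ^ 2 - ((lam : ℝ) : ℂ)) ≠ 0 := by
    intro j hj
    have h1 : Mlam *ᵥ u j = 0 := by
      rw [hMlamv, hBBu, ← sub_smul, hj, zero_smul]
    have h2 : Mlam *ᵥ (0 : Fin m → ℂ) = 0 := mulVec_zero _
    have h3 : u j = 0 := hMlaminj (h1.trans h2.symm)
    have h4 := hu j j
    rw [h3] at h4
    simp at h4
  -- the q vector
  set qc : Fin (Nat.min m n) → ℂ :=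
    fun j => ((σ j : ℂ) * t j) / ((σ j : ℂ) ^ 2 - ((lam : ℝ) : ℂ)) with hqc
  have hMlamq : Mlam *ᵥ (∑ j, qc j • u j) = g := by
    rw [mulVec_sum']
    have : ∀ j, Mlam *ᵥ (qc j • u j) = ((σ j : ℂ) * t j) • u j := by
      intro j
      rw [mulVec_smul, hMlamv, hBBu, ← sub_smul, smul_smul]
      congr 1
      rw [hqc]
      exact div_mul_cancel₀ _ (hlamne j)
    simp only [this]
    exact hg.symm
  have hqeq : Mlam⁻¹ *ᵥ g = ∑ j, qc j • u j := by
    rw [← hMlamq, mulVec_mulVec, Matrix.nonsing_inv_mul Mlam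
      ((Matrix.isUnit_iff_isUnit_det Mlam).mp hinvlam), one_mulVec]
  -- the correction vector h
  have hPmv : ∀ x, P *ᵥ x = ∑ i : Fin k, (star (u (K i)) ⬝ᵥ x) • u (K i) := by
    intro x
    rw [hP, sum_mulVec']
    exact Finset.sum_congr rfl fun i _ => vecMulVec_mulVec' _ _ _
  have hh : (Blam * B * Eᴴ) *ᵥ y
      = ∑ j : Fin (Nat.min m n), (if (j : ℕ) < k then 0 else qc j) • u j := by
    have e1 : (Blam * B * Eᴴ) *ᵥ y = Blam *ᵥ g := by
      rw [hgdef, mulVec_mulVec, mulVec_mulVec, Matrix.mul_assoc]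
    rw [e1, hBlam, ← mulVec_mulVec, hqeq, sub_mulVec, one_mulVec, hPmv]
    have e2 : ∀ i : Fin k, (star (u (K i)) ⬝ᵥ (∑ j, qc j • u j)) • u (K i)
        = qc (K i) • u (K i) := by
      intro i
      rw [dot_coeff u hu qc (K i)]
    simp only [e2]
    rw [sum_castLE hkm.le (fun j => qc j • u j), ← Finset.sum_sub_distrib]
    refine Finset.sum_congr rfl fun j _ => ?_
    split_ifs with hj
    · simp
    · simp
  -- the residual vector
  set β : Fin (Nat.min m n) → ℂ :=
    fun j => if (j : ℕ) < k then 0 else α j + qc j with hβ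
  set c : Fin k → ℂ := fun i => α (K i) with hc
  have hr : Sum.elim f y -
      Sum.elim (∑ j : Fin k, c j • u (K j) + (-(Blam * B * Eᴴ)) *ᵥ y) y
      = Sum.elim (∑ j, β j • u j) 0 := by
    funext i
    cases i with
    | inl i =>
      simp only [Sum.elim_inl, Pi.sub_apply]
      have : f - (∑ j : Fin k, c j • u (K j) + (-(Blam * B * Eᴴ)) *ᵥ y)
          = ∑ j, β j • u j := by
        rw [neg_mulVec, hh, hf, hc]
        rw [sum_castLE hkm.le (fun j => α j • u j)]
        rw [← Finset.sum_neg_distrib, ← Finset.sum_add_distrib, ← Finset.sum_sub_distrib]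
        refine Finset.sum_congr rfl fun j _ => ?_
        by_cases hj : (j : ℕ) < k <;> simp [hβ, hj, add_smul]
      exact congrFun this i
    | inr i => simp
  -- numeric preliminaries
  have hσk0 : 0 ≤ σ ιk := hσnn ιk
  have hσ'sq : σ ιk ^ 2 < σ' ^ 2 := by nlinarith
  have hlamge : σ' ^ 2 ≤ lam := by
    have h1 := hlam (Sum.elim f y)
    rw [hsv] at h1
    have h2 : star (Sum.elim f y) ⬝ᵥ Sum.elim f y = 1 := by
      rw [dot_self_eq, hunit]; norm_num
    rw [dotProduct_smul, h2,
      show ((σ' : ℂ) ^ 2) = (((σ' ^ 2 : ℝ)) : ℂ) by push_cast; ring] at h1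
    simpa [← Complex.ofReal_pow] using h1
  have hγnn : 0 ≤ l2norm (Eᴴ *ᵥ y) := Real.sqrt_nonneg _
  set γ : ℝ := l2norm (Eᴴ *ᵥ y) with hγ
  have hγsq : γ ^ 2 = ∑ i, Complex.normSq ((Eᴴ *ᵥ y) i) := by
    rw [hγ, l2norm, Real.sq_sqrt]
    exact Finset.sum_nonneg fun i _ => Complex.normSq_nonneg _
  set C : ℝ := (σ ιk * |σ' ^ 2 - lam|) / (|σ ιk ^ 2 - σ' ^ 2| * |σ ιk ^ 2 - lam|) with hC
  have hCnn : 0 ≤ C := by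
    apply div_nonneg
    · exact mul_nonneg hσk0 (abs_nonneg _)
    · exact mul_nonneg (abs_nonneg _) (abs_nonneg _)
  have hCalt : C = (σ ιk * (lam - σ' ^ 2)) / ((σ' ^ 2 - σ ιk ^ 2) * (lam - σ ιk ^ 2)) := by
    rw [hC, abs_of_nonpos (by linarith : σ' ^ 2 - lam ≤ 0),
      abs_of_nonpos (by linarith : σ ιk ^ 2 - σ' ^ 2 ≤ 0),
      abs_of_nonpos (by linarith : σ ιk ^ 2 - lam ≤ 0)]
    ring_nf
  -- per-term bound
  have hterm : ∀ j, Complex.normSq (β j) ≤ C ^ 2 * Complex.normSq (t j) := by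
    intro j
    by_cases hj : (j : ℕ) < k
    · rw [hβ]
      simp only [hj, if_true]
      have : Complex.normSq 0 = 0 := Complex.normSq_zero
      rw [this]
      exact mul_nonneg (sq_nonneg C) (Complex.normSq_nonneg _)
    · have hkj : ιk ≤ j := by
        rw [hιk]
        exact Fin.mk_le_of_le_val (le_of_not_gt hj)
      have hσj : σ j ≤ σ ιk := hσanti hkj
      have hσjnn : 0 ≤ σ j := hσnn j
      have hσjsq : σ j ^ 2 ≤ σ ιk ^ 2 := by nlinarith
      set D : ℝ := (σ j * (lam - σ' ^ 2)) / ((σ' ^ 2 - σ j ^ 2) * (lam - σ j ^ 2)) with hD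
      have hβj : β j = ((D : ℝ) : ℂ) * t j := by
        rw [hβ]
        simp only [hj, if_false]
        rw [hα, hqc, hD]
        have e1 : ((σ j : ℂ) ^ 2 - (σ' : ℂ) ^ 2) ≠ 0 := hdne j
        have e2 : ((σ j : ℂ) ^ 2 - ((lam : ℝ) : ℂ)) ≠ 0 := hlamne j
        have e3 : (((σ' ^ 2 - σ j ^ 2) * (lam - σ j ^ 2) : ℝ) : ℂ) ≠ 0 :=
          Complex.ofReal_ne_zero.mpr (ne_of_gt (by nlinarith))
        push_cast
        rw [div_add_div _ _ e1 e2, div_mul_eq_mul_div, div_eq_div_iff (mul_ne_zero e1 e2)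
          (by push_cast at e3 ⊢; exact e3)]
        ring
      have hDnn : 0 ≤ D := by
        apply div_nonneg
        · apply mul_nonneg hσjnn; linarith
        · apply mul_nonneg <;> nlinarith
      have hDC : D ≤ C := by
        rw [hCalt, hD]
        have hd1 : 0 < σ' ^ 2 - σ ιk ^ 2 := by linarith
        have hd2 : 0 < lam - σ ιk ^ 2 := by linarith
        apply div_le_div₀ (mul_nonneg hσk0 (by linarith))
          (by nlinarith) (by positivity)
        apply mul_le_mul <;> nlinarith
      have hnsq : Complex.normSq (β j) = D ^ 2 * Complex.normSq (t j) := by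
        rw [hβj, Complex.normSq_mul, Complex.normSq_ofReal, sq]
      rw [hnsq]
      apply mul_le_mul_of_nonneg_right _ (Complex.normSq_nonneg _)
      nlinarith
  -- the chosen element of the set
  set d0 : ℝ := l2norm (Sum.elim (∑ j, β j • u j) (0 : Fin s → ℂ)) with hd0
  have hmem : d0 ∈ {d : ℝ | ∃ (c : Fin k → ℂ) (w' : Fin s → ℂ) (w : Fin s → ℂ),
      d = l2norm (Sum.elim f y -
        Sum.elim (∑ j : Fin k, c j • u (Fin.castLE hkm.le j) +
          (-(Blam * B * Eᴴ)) *ᵥ w') w)} := by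
    exact ⟨c, y, y, by rw [← hKdef, hr]⟩
  have hbdd : BddBelow {d : ℝ | ∃ (c : Fin k → ℂ) (w' : Fin s → ℂ) (w : Fin s → ℂ),
      d = l2norm (Sum.elim f y -
        Sum.elim (∑ j : Fin k, c j • u (Fin.castLE hkm.le j) +
          (-(Blam * B * Eᴴ)) *ᵥ w') w)} := by
    refine ⟨0, fun d hd => ?_⟩
    obtain ⟨c', w', w, rfl⟩ := hd
    exact Real.sqrt_nonneg _
  -- bound d0
  have hd0val : d0 = Real.sqrt (∑ j, Complex.normSq (β j)) := by
    rw [hd0, l2norm, Fintype.sum_sum_type]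
    simp only [Sum.elim_inl, Sum.elim_inr, Pi.zero_apply, Complex.normSq_zero,
      Finset.sum_const_zero, add_zero]
    rw [norm_ortho u hu β]
  have hsumbound : ∑ j, Complex.normSq (β j) ≤ C ^ 2 * γ ^ 2 := by
    calc ∑ j, Complex.normSq (β j) ≤ ∑ j, C ^ 2 * Complex.normSq (t j) :=
          Finset.sum_le_sum fun j _ => hterm j
      _ = C ^ 2 * ∑ j, Complex.normSq (t j) := by rw [Finset.mul_sum]
      _ ≤ C ^ 2 * ∑ i, Complex.normSq ((Eᴴ *ᵥ y) i) := by
          apply mul_le_mul_of_nonneg_left _ (by positivity)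
          exact bessel v hv (Eᴴ *ᵥ y)
      _ = C ^ 2 * γ ^ 2 := by rw [hγsq]
  have hd0le : d0 ≤ γ * C := by
    rw [hd0val]
    have : C ^ 2 * γ ^ 2 = (γ * C) ^ 2 := by ring
    rw [this] at hsumbound
    calc Real.sqrt (∑ j, Complex.normSq (β j)) ≤ Real.sqrt ((γ * C) ^ 2) :=
          Real.sqrt_le_sqrt hsumbound
      _ = γ * C := Real.sqrt_sq (mul_nonneg hγnn hCnn)
  have hRHS : γ * C = |γ * σ ιk * (σ' ^ 2 - lam)| /
      (|σ ιk ^ 2 - σ' ^ 2| * |σ ιk ^ 2 - lam|) := by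
    rw [hC, abs_mul, abs_mul, abs_of_nonneg hγnn, abs_of_nonneg hσk0]
    ring
  refine csInf_le_of_le hbdd hmem ?_
  rw [← hRHS]
  exact hd0le
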